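/- Let F be a free R-module of rank n, let γ ∈ ⋀^n F* be a top-degree dual form, and let a, b be homogeneous elements of ⋀F. Then (a ⌟ γ) ⌟ b = (−1)^ν (b ⌟ γ) ⌟ a, where ν = (n − deg a)(n − deg b). -/

import Mathlib

open ExteriorAlgebra

noncomputable def extMap (R : Type*) [CommRing R] {M N : Type*} [AddCommGroup M] [AddCommGroup N]
    [Module R M] [Module R N] (f : M →ₗ[R] N) :
    ExteriorAlgebra R M →ₐ[R] ExteriorAlgebra R N :=
  ExteriorAlgebra.lift R ⟨(ExteriorAlgebra.ι R).comp f, fun m => by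
    simp [ExteriorAlgebra.ι_sq_zero (f m)]⟩

noncomputable def extContract (R : Type*) [CommRing R] {M : Type*} [AddCommGroup M] [Module R M] :
    ExteriorAlgebra R (Module.Dual R M) →ₐ[R] Module.End R (ExteriorAlgebra R M) :=
  ExteriorAlgebra.lift R ⟨(CliffordAlgebra.contractLeft (Q := (0 : QuadraticForm R M)) :
      Module.Dual R M →ₗ[R] Module.End R (ExteriorAlgebra R M)), fun d => by
    refine LinearMap.ext fun x => ?_
    rw [Module.End.mul_apply, LinearMap.zero_apply]
    exact CliffordAlgebra.contractLeft_contractLeft (Q := (0 : QuadraticForm R M)) (d := d) x⟩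

noncomputable def extContractD (R : Type*) [CommRing R] {M : Type*} [AddCommGroup M] [Module R M] :
    ExteriorAlgebra R M →ₐ[R] Module.End R (ExteriorAlgebra R (Module.Dual R M)) :=
  ExteriorAlgebra.lift R ⟨(CliffordAlgebra.contractLeft
      (Q := (0 : QuadraticForm R (Module.Dual R M))) :
      Module.Dual R (Module.Dual R M) →ₗ[R] _).comp (Module.Dual.eval R M), fun m => by
    refine LinearMap.ext fun x => ?_
    rw [Module.End.mul_apply, LinearMap.zero_apply, LinearMap.comp_apply]
    exact CliffordAlgebra.contractLeft_contractLeft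
      (Q := (0 : QuadraticForm R (Module.Dual R M))) (d := Module.Dual.eval R M m) x⟩

def extDeg (R : Type*) [CommRing R] {M : Type*} [AddCommGroup M] [Module R M] (i : ℕ)
    (x : ExteriorAlgebra R M) : Prop :=
  x ∈ (LinearMap.range (ExteriorAlgebra.ι R : M →ₗ[R] ExteriorAlgebra R M)) ^ i

namespace CTS

variable {R : Type*} [CommRing R] {M W : Type*} [AddCommGroup M] [AddCommGroup W]
  [Module R M] [Module R W]

noncomputable abbrev deg (R : Type*) [CommRing R] (M : Type*) [AddCommGroup M] [Module R M]
    (k : ℕ) : Submodule R (ExteriorAlgebra R M) :=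
  (LinearMap.range (ι R : M →ₗ[R] ExteriorAlgebra R M)) ^ k

noncomputable abbrev cL (d : Module.Dual R M) : Module.End R (ExteriorAlgebra R M) :=
  CliffordAlgebra.contractLeft (Q := (0 : QuadraticForm R M)) d

lemma cL_ι_mul (d : Module.Dual R M) (v : M) (x : ExteriorAlgebra R M) :
    cL d (ι R v * x) = d v • x - ι R v * cL d x :=
  CliffordAlgebra.contractLeft_ι_mul (Q := (0 : QuadraticForm R M)) (d := d) v x

lemma cL_alg (d : Module.Dual R M) (r : R) :
    cL d (algebraMap R (ExteriorAlgebra R M) r) = 0 :=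
  CliffordAlgebra.contractLeft_algebraMap (Q := (0 : QuadraticForm R M)) (d := d) r

lemma cL_zeroDeg (d : Module.Dual R M) {x : ExteriorAlgebra R M}
    (hx : x ∈ deg R M 0) : cL d x = 0 := by
  rw [deg, pow_zero] at hx
  obtain ⟨r, rfl⟩ := Submodule.mem_one.mp hx
  exact cL_alg d r

lemma cL_deg (d : Module.Dual R M) :
    ∀ k, ∀ x ∈ deg R M k, cL d x ∈ deg R M (k-1) := by
  intro k
  induction k with
  | zero => intro x hx; rw [cL_zeroDeg d hx]; exact zero_mem _
  | succ k ih =>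
    intro x hx
    rw [deg, pow_succ'] at hx
    simp only [Nat.add_sub_cancel]
    refine Submodule.mul_induction_on hx (fun m hm y hy => ?_) (fun y z hy hz => ?_)
    · obtain ⟨v, rfl⟩ := hm
      rw [cL_ι_mul]
      refine sub_mem (Submodule.smul_mem _ _ hy) ?_
      cases k with
      | zero => rw [cL_zeroDeg d hy, mul_zero]; exact zero_mem _
      | succ k' =>
        have h2 := ih y hy
        simp only [Nat.add_sub_cancel] at h2
        rw [deg, pow_succ']
        exact Submodule.mul_mem_mul (LinearMap.mem_range_self _ v) h2
    · rw [map_add]; exact add_mem hy hz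

section Phi

variable (B : W →ₗ[R] Module.Dual R M)
  (Φ : ExteriorAlgebra R W →ₐ[R] Module.End R (ExteriorAlgebra R M))
  (hΦ : ∀ w, Φ (ι R w) = cL (B w))

include hΦ

lemma Φ_ι_mul (f : W) (e : ExteriorAlgebra R W) (x : ExteriorAlgebra R M) :
    Φ (ι R f * e) x = cL (B f) (Φ e x) := by
  rw [map_mul, Module.End.mul_apply, hΦ]

omit hΦ in
lemma Φ_alg (r : R) (x : ExteriorAlgebra R M) :
    Φ (algebraMap R _ r) x = r • x := by
  rw [AlgHom.commutes, Module.algebraMap_end_apply]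

lemma Φ_deg : ∀ k, ∀ e ∈ deg R W k, ∀ q, ∀ x ∈ deg R M q, Φ e x ∈ deg R M (q - k) := by
  intro k
  induction k with
  | zero =>
    intro e he q x hx
    rw [deg, pow_zero] at he
    obtain ⟨r, rfl⟩ := Submodule.mem_one.mp he
    rw [Φ_alg Φ, Nat.sub_zero]
    exact Submodule.smul_mem _ _ hx
  | succ k ih =>
    intro e he q x hx
    rw [deg, pow_succ'] at he
    refine Submodule.mul_induction_on he (fun m hm y hy => ?_) (fun y z hy hz => ?_)
    · obtain ⟨f, rfl⟩ := hm
      rw [Φ_ι_mul B Φ hΦ]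
      have := cL_deg (B f) (q - k) (Φ y x) (ih y hy q x hx)
      rwa [Nat.sub_sub] at this
    · rw [map_add, LinearMap.add_apply]; exact add_mem hy hz

lemma Φ_vanish : ∀ k, ∀ e ∈ deg R W k, ∀ q, q < k → ∀ x ∈ deg R M q, Φ e x = 0 := by
  intro k
  induction k with
  | zero => intro e he q hq; omega
  | succ k ih =>
    intro e he q hq x hx
    rw [deg, pow_succ'] at he
    refine Submodule.mul_induction_on he (fun m hm y hy => ?_) (fun y z hy hz => ?_)
    · obtain ⟨f, rfl⟩ := hm
      rw [Φ_ι_mul B Φ hΦ]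
      rcases Nat.lt_or_ge q k with h | h
      · rw [ih y hy q h x hx, map_zero]
      · have hqk : q = k := le_antisymm (Nat.lt_succ_iff.mp hq) h
        subst hqk
        exact cL_zeroDeg _ (by simpa using Φ_deg B Φ hΦ q y hy q x hx)
    · rw [map_add, LinearMap.add_apply, hy, hz, add_zero]

end Phi

lemma ι_mul_comm_deg :
    ∀ k, ∀ y ∈ deg R M k, ∀ v : M, ι R v * y = ((-1:R)^k) • (y * ι R v) := by
  intro k y hy
  refine Submodule.pow_induction_on_left' (LinearMap.range (ι R : M →ₗ[R] ExteriorAlgebra R M))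
    (C := fun k y _ => ∀ v : M, ι R v * y = ((-1:R)^k) • (y * ι R v)) ?_ ?_ ?_ hy
  · intro r v
    rw [pow_zero, one_smul, ← Algebra.commutes]
  · intro x y i hx hy ihx ihy v
    rw [mul_add, add_mul, smul_add, ihx v, ihy v]
  · intro m hm i x hx ihx v
    obtain ⟨w, rfl⟩ := hm
    have hvw : ι R v * ι R w = -(ι R w * ι R v) := by
      rw [CliffordAlgebra.ι_mul_ι_comm]
      simp [QuadraticMap.polar]
    calc ι R v * (ι R w * x) = (ι R v * ι R w) * x := by rw [mul_assoc]
      _ = -(ι R w * (ι R v * x)) := by rw [hvw, neg_mul, mul_assoc]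
      _ = -(ι R w * (((-1:R)^i) • (x * ι R v))) := by rw [ihx v]
      _ = ((-1:R)^(i+1)) • (ι R w * x * ι R v) := by
        rw [mul_smul_comm, ← neg_smul, pow_succ, mul_assoc]
        ring_nf

section GA

variable (B : W →ₗ[R] Module.Dual R M) (B' : M →ₗ[R] Module.Dual R W)
  (Φ : ExteriorAlgebra R W →ₐ[R] Module.End R (ExteriorAlgebra R M))
  (hΦ : ∀ w, Φ (ι R w) = cL (B w))
  (hBB' : ∀ w m, B w m = B' m w)

include hΦ hBB'

/-- The key expansion identity (Leibniz rule for contraction against a wedge). -/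
lemma Φ_expand :
    ∀ m, ∀ e ∈ deg R W m, ∀ (v : M) (x : ExteriorAlgebra R M),
      Φ e (ι R v * x) =
        ((-1:R)^(m+1)) • Φ (cL (B' v) e) x + ((-1:R)^m) • (ι R v * Φ e x) := by
  intro m e he
  refine Submodule.pow_induction_on_left' (LinearMap.range (ι R : W →ₗ[R] ExteriorAlgebra R W))
    (C := fun m e _ => ∀ (v : M) (x : ExteriorAlgebra R M),
      Φ e (ι R v * x) =
        ((-1:R)^(m+1)) • Φ (cL (B' v) e) x + ((-1:R)^m) • (ι R v * Φ e x)) ?_ ?_ ?_ he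
  · intro r v x
    rw [Φ_alg Φ, cL_alg, map_zero, LinearMap.zero_apply, Φ_alg Φ]
    simp [mul_smul_comm]
  · intro e₁ e₂ i h₁ h₂ ih₁ ih₂ v x
    simp only [map_add, LinearMap.add_apply, ih₁ v x, ih₂ v x, mul_add, smul_add]
    abel
  · intro w hw i e' he' ih v x
    obtain ⟨f, rfl⟩ := hw
    have hcv : cL (B' v) (ι R f * e') = B f v • e' - ι R f * cL (B' v) e' := by
      rw [cL_ι_mul, hBB']
    rw [Φ_ι_mul B Φ hΦ, ih v x, map_add, map_smul, map_smul, hcv, map_sub, map_smul,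
      LinearMap.sub_apply, LinearMap.smul_apply]
    simp only [Φ_ι_mul B Φ hΦ, cL_ι_mul, Nat.succ_eq_add_one, pow_succ, smul_sub, smul_smul]
    module

end GA

section Pairing

variable (B : W →ₗ[R] Module.Dual R M) (B' : M →ₗ[R] Module.Dual R W)
  (Φ : ExteriorAlgebra R W →ₐ[R] Module.End R (ExteriorAlgebra R M))
  (Φ' : ExteriorAlgebra R M →ₐ[R] Module.End R (ExteriorAlgebra R W))
  (hΦ : ∀ w, Φ (ι R w) = cL (B w))
  (hΦ' : ∀ m, Φ' (ι R m) = cL (B' m))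
  (hBB' : ∀ w m, B w m = B' m w)

include hΦ hΦ' hBB'

lemma pairing_symm :
    ∀ k, ∀ γ ∈ deg R W k, ∀ b ∈ deg R M k, Φ γ b = Φ (Φ' b γ) 1 := by
  intro k
  induction k with
  | zero =>
    intro γ hγ b hb
    rw [deg, pow_zero] at hγ hb
    obtain ⟨r, rfl⟩ := Submodule.mem_one.mp hγ
    obtain ⟨t, rfl⟩ := Submodule.mem_one.mp hb
    simp [Φ_alg Φ, Φ_alg Φ', Algebra.algebraMap_eq_smul_one, smul_smul, mul_comm]
  | succ k ih =>
    intro γ hγ b hb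
    rw [deg, pow_succ'] at hγ hb
    refine Submodule.mul_induction_on hγ (fun w hw γ' hγ' => ?_) (fun y z hy hz => ?_)
    swap
    · simp only [map_add, LinearMap.add_apply, hy, hz]
    obtain ⟨f, rfl⟩ := hw
    refine Submodule.mul_induction_on hb (fun m hm b' hb' => ?_) (fun y z hy hz => ?_)
    swap
    · simp only [map_add, LinearMap.add_apply, hy, hz]
    obtain ⟨v, rfl⟩ := hm
    -- core case
    set γ'' := cL (B' v) γ' with hγ''def
    set b'' := cL (B f) b' with hb''def
    have hmemγ : (ι R f * γ') ∈ deg R W (k+1) := by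
      rw [deg, pow_succ']
      exact Submodule.mul_mem_mul (LinearMap.mem_range_self _ f) hγ'
    have hmemb : (ι R v * b') ∈ deg R M (k+1) := by
      rw [deg, pow_succ']
      exact Submodule.mul_mem_mul (LinearMap.mem_range_self _ v) hb'
    have hLHS : Φ (ι R f * γ') (ι R v * b') =
        ((-1:R)^(k+2)) • (B f v • Φ γ' b' - Φ (ι R f * γ'') b') := by
      rw [Φ_expand B B' Φ hΦ hBB' (k+1) _ hmemγ v b',
        Φ_vanish B Φ hΦ (k+1) _ hmemγ k (Nat.lt_succ_self k) b' hb']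
      rw [cL_ι_mul, hBB' f v]
      simp only [map_sub, map_smul, LinearMap.sub_apply, LinearMap.smul_apply, mul_zero,
        smul_zero, add_zero, smul_sub]
      rfl
    have hinner : Φ' (ι R v * b') (ι R f * γ') =
        ((-1:R)^(k+2)) • (B f v • Φ' b' γ' - Φ' (ι R v * b'') γ') := by
      rw [Φ_expand B' B Φ' hΦ' (fun m w => (hBB' w m).symm) (k+1) _ hmemb f γ',
        Φ_vanish B' Φ' hΦ' (k+1) _ hmemb k (Nat.lt_succ_self k) γ' hγ']
      rw [cL_ι_mul]
      simp only [map_sub, map_smul, LinearMap.sub_apply, LinearMap.smul_apply, mul_zero,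
        smul_zero, add_zero, smul_sub]
      rfl
    have hdagger : Φ (ι R f * γ'') b' = Φ (Φ' (ι R v * b'') γ') 1 := by
      cases k with
      | zero =>
        have h1 : γ'' = 0 := cL_zeroDeg (B' v) hγ'
        have h2 : b'' = 0 := cL_zeroDeg (B f) hb'
        simp [h1, h2]
      | succ k' =>
        have hγ'' : γ'' ∈ deg R W k' := by
          have := cL_deg (B' v) (k'+1) γ' hγ'
          simpa using this
        have hb'' : b'' ∈ deg R M k' := by
          have := cL_deg (B f) (k'+1) b' hb'
          simpa using this
        have hmem2 : (ι R f * γ'') ∈ deg R W (k'+1) := by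
          rw [deg, pow_succ']
          exact Submodule.mul_mem_mul (LinearMap.mem_range_self _ f) hγ''
        have step1 : Φ (ι R f * γ'') b' = Φ (Φ' b' (ι R f * γ'')) 1 :=
          ih _ hmem2 b' hb'
        have step2 : Φ' b' (ι R f * γ'') = ((-1:R)^(k'+2)) • Φ' b'' γ'' := by
          rw [Φ_expand B' B Φ' hΦ' (fun m w => (hBB' w m).symm) (k'+1) b' hb' f γ'',
            Φ_vanish B' Φ' hΦ' (k'+1) b' hb' k' (Nat.lt_succ_self k') γ'' hγ'']
          simp only [mul_zero, smul_zero, add_zero]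
          rfl
        have step3 : Φ' (ι R v * b'') γ' = ((-1:R)^(k')) • Φ' b'' (cL (B' v) γ') := by
          rw [ι_mul_comm_deg k' b'' hb'' v, map_smul, LinearMap.smul_apply, map_mul,
            Module.End.mul_apply, hΦ']
        rw [step1, step2, step3, hγ''def, map_smul, map_smul, LinearMap.smul_apply,
          LinearMap.smul_apply]
        congr 1
        simp [pow_succ]
    rw [hLHS, hinner, map_smul, LinearMap.smul_apply, map_sub, map_smul, LinearMap.sub_apply,
      LinearMap.smul_apply, ih γ' hγ' b' hb', hdagger]

end Pairing

section Main

variable (B : W →ₗ[R] Module.Dual R M) (B' : M →ₗ[R] Module.Dual R W)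
  (Φ : ExteriorAlgebra R W →ₐ[R] Module.End R (ExteriorAlgebra R M))
  (Φ' : ExteriorAlgebra R M →ₐ[R] Module.End R (ExteriorAlgebra R W))
  (hΦ : ∀ w, Φ (ι R w) = cL (B w))
  (hΦ' : ∀ m, Φ' (ι R m) = cL (B' m))
  (hBB' : ∀ w m, B w m = B' m w)

include hΦ hΦ' hBB'

lemma main_generic (n : ℕ) (htop : deg R M (n+1) = ⊥)
    {γ : ExteriorAlgebra R W} (hγ : γ ∈ deg R W n) :
    ∀ p, p ≤ n → ∀ a ∈ deg R M p, ∀ q, q ≤ n → ∀ b ∈ deg R M q,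
      Φ (Φ' a γ) b = ((-1:R)^((n-p)*(n-q))) • Φ (Φ' b γ) a := by
  intro p
  induction p with
  | zero =>
    intro _ a ha q hq b hb
    rw [deg, pow_zero] at ha
    obtain ⟨r, rfl⟩ := Submodule.mem_one.mp ha
    have h1 : Φ' ((algebraMap R (ExteriorAlgebra R M)) r) γ = r • γ := Φ_alg Φ' r γ
    have halg : (algebraMap R (ExteriorAlgebra R M) r) ∈ deg R M 0 := by
      rw [deg, pow_zero]; exact Submodule.mem_one.mpr ⟨r, rfl⟩
    rcases Nat.lt_or_ge q n with h | h
    · have hL : Φ γ b = 0 := Φ_vanish B Φ hΦ n γ hγ q h b hb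
      have hδ : Φ' b γ ∈ deg R W (n - q) := Φ_deg B' Φ' hΦ' q b hb n γ hγ
      have hR : Φ (Φ' b γ) ((algebraMap R (ExteriorAlgebra R M)) r) = 0 :=
        Φ_vanish B Φ hΦ (n-q) _ hδ 0 (by omega) _ halg
      rw [h1, map_smul, LinearMap.smul_apply, hL, smul_zero, hR, smul_zero]
    · have hqn : q = n := le_antisymm hq h
      subst hqn
      rw [h1, map_smul, LinearMap.smul_apply,
        pairing_symm B B' Φ Φ' hΦ hΦ' hBB' _ γ hγ b hb, Nat.sub_self, Nat.mul_zero, pow_zero,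
        one_smul]
      simp [Algebra.algebraMap_eq_smul_one]
  | succ p ih =>
    intro hp a ha q hq b hb
    rw [deg, pow_succ'] at ha
    refine Submodule.mul_induction_on ha (fun m hm a' ha' => ?_) (fun y z hy hz => ?_)
    swap
    · simp only [map_add, LinearMap.add_apply, hy, hz, smul_add]
    obtain ⟨v, rfl⟩ := hm
    have hp' : p ≤ n := Nat.le_of_succ_le hp
    have he : Φ' a' γ ∈ deg R W (n - p) := Φ_deg B' Φ' hΦ' p a' ha' n γ hγ
    have hδ : Φ' b γ ∈ deg R W (n - q) := Φ_deg B' Φ' hΦ' q b hb n γ hγ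
    have hΦ'a : Φ' (ι R v * a') γ = cL (B' v) (Φ' a' γ) := Φ_ι_mul B' Φ' hΦ' v a' γ
    have hΦ'b : Φ' (ι R v * b) γ = cL (B' v) (Φ' b γ) := Φ_ι_mul B' Φ' hΦ' v b γ
    have h11 : ((-1:R)^(n-p+1)) * ((-1:R)^(n-p+1)) = 1 := by
      rw [← pow_add]; exact Even.neg_one_pow ⟨n-p+1, by ring⟩
    have h12 : ((-1:R)^(n-p+1)) * ((-1:R)^(n-p)) = -1 := by
      rw [← pow_add]; exact Odd.neg_one_pow ⟨n-p, by ring⟩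
    have key1 := Φ_expand B B' Φ hΦ hBB' (n-p) _ he v b
    have hLHS : Φ (Φ' (ι R v * a') γ) b
        = ((-1:R)^(n-p+1)) • Φ (Φ' a' γ) (ι R v * b) + ι R v * Φ (Φ' a' γ) b := by
      rw [hΦ'a, key1, smul_add, smul_smul, smul_smul, h11, h12, one_smul, neg_one_smul]
      abel
    have key2 := Φ_expand B B' Φ hΦ hBB' (n-q) _ hδ v a'
    have IHb := ih hp' a' ha' q hq b hb
    have IHvb : Φ (Φ' a' γ) (ι R v * b)
        = ((-1:R)^((n-p)*(n-q-1))) • Φ (Φ' (ι R v * b) γ) a' := by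
      rcases Nat.lt_or_ge q n with h | h
      · have hvb : ι R v * b ∈ deg R M (q+1) := by
          rw [deg, pow_succ']
          exact Submodule.mul_mem_mul (LinearMap.mem_range_self _ v) hb
        have heq : n - (q+1) = n - q - 1 := by omega
        have h2 := ih hp' a' ha' (q+1) (by omega) _ hvb
        rwa [heq] at h2
      · have hqn : q = n := le_antisymm hq h
        have hzero : ι R v * b = 0 := by
          have hmem : ι R v * b ∈ deg R M (n+1) := by
            rw [deg, pow_succ']
            exact Submodule.mul_mem_mul (LinearMap.mem_range_self _ v) (hqn ▸ hb)
          rw [htop] at hmem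
          simpa using hmem
        rw [hzero]
        simp
    rw [hLHS, IHvb, IHb, key2, ← hΦ'b]
    simp only [smul_smul, mul_smul_comm, smul_add, ← pow_add]
    rcases Nat.lt_or_ge q n with h | h
    · obtain ⟨P', hP⟩ : ∃ t, n - p = t + 1 := ⟨n - p - 1, by omega⟩
      obtain ⟨Q', hQ⟩ : ∃ t, n - q = t + 1 := ⟨n - q - 1, by omega⟩
      have hP1 : n - (p+1) = P' := by omega
      have hQ1 : n - q - 1 = Q' := by omega
      have e1 : (n-p+1) + (n-p)*(n-q-1) = (n-(p+1))*(n-q) + (n-q+1) := by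
        rw [hQ1, hP1, hP, hQ]; ring
      have e2 : (n-p)*(n-q) = (n-(p+1))*(n-q) + (n-q) := by
        rw [hP1, hP, hQ]; ring
      rw [e1, e2]
    · have hqn : q = n := le_antisymm hq h
      have hzero : ι R v * b = 0 := by
        have hmem : ι R v * b ∈ deg R M (n+1) := by
          rw [deg, pow_succ']
          exact Submodule.mul_mem_mul (LinearMap.mem_range_self _ v) (hqn ▸ hb)
        rw [htop] at hmem
        simpa using hmem
      simp [hzero, hqn, Nat.sub_self]

end Main

lemma deg_top_vanish {κ : Type*} [Fintype κ] (bas : Module.Basis κ R M) {p : ℕ}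
    (hp : Fintype.card κ < p) : deg R M p = ⊥ := by
  have h : deg R M p = Submodule.span R (Set.range (ιMulti R p)) :=
    (ιMulti_span_fixedDegree R p).symm
  rw [h, Submodule.span_eq_bot]
  rintro x ⟨v, rfl⟩
  have expand : v = fun i => ∑ j, bas.repr (v i) j • bas j :=
    funext fun i => (bas.sum_repr (v i)).symm
  have hzero : ∀ r : Fin p → κ, ιMulti R p (fun i => bas (r i)) = 0 := by
    intro r
    obtain ⟨i, j, hne, heq⟩ := Fintype.exists_ne_map_eq_of_card_lt r (by simpa using hp)
    exact AlternatingMap.map_eq_zero_of_eq _ _ (congrArg bas heq) hne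
  calc ιMulti R p v
      = (ιMulti R p).toMultilinearMap (fun i => ∑ j, bas.repr (v i) j • bas j) := by
        conv_lhs => rw [expand]
        rfl
    _ = ∑ r : Fin p → κ, (ιMulti R p).toMultilinearMap
          (fun i => bas.repr (v i) (r i) • bas (r i)) := MultilinearMap.map_sum _ _
    _ = 0 := by
        refine Finset.sum_eq_zero fun r _ => ?_
        rw [MultilinearMap.map_smul_univ]
        have := hzero r
        simp only [AlternatingMap.coe_multilinearMap] at this ⊢
        rw [this, smul_zero]

end CTS

set_option maxHeartbeats 1000000 in
set_option synthInstance.maxHeartbeats 1000000 in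
/-- Proposition 1.2(b): if `F` is free of rank `n`, `γ ∈ ⋀^n F*` and `a`, `b` are
homogeneous of degrees `p`, `q`, then `(a ⌟ γ) ⌟ b = (-1)^((n-p)(n-q)) • ((b ⌟ γ) ⌟ a)`. -/
theorem contraction_top_symmetry (R : Type*) [CommRing R]
    (F : Type*) [AddCommGroup F] [Module R F] [Module.Free R F] [Module.Finite R F]
    (n : ℕ) (hrank : Module.finrank R F = n)
    (γ : ExteriorAlgebra R (Module.Dual R F)) (hγ : extDeg R n γ)
    (a b : ExteriorAlgebra R F) (p q : ℕ) (ha : extDeg R p a) (hb : extDeg R q b) :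
    extContract R (extContractD R a γ) b =
      ((-1 : R) ^ ((n - p) * (n - q))) • extContract R (extContractD R b γ) a := by

  classical
  rcases subsingleton_or_nontrivial R with hR | hR
  · haveI := Module.subsingleton R (ExteriorAlgebra R F)
    exact Subsingleton.elim _ _
  have bas := Module.Free.chooseBasis R F
  have hcard : Fintype.card (Module.Free.ChooseBasisIndex R F) = n := by
    rw [← Module.finrank_eq_card_chooseBasisIndex, hrank]
  have hbot : ∀ k, n < k → ∀ x : ExteriorAlgebra R F, x ∈ CTS.deg R F k → x = 0 := by
    intro k hk x hx
    rw [CTS.deg_top_vanish bas (by omega)] at hx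
    simpa using hx
  have hΦ : ∀ d : Module.Dual R F,
      extContract R (ExteriorAlgebra.ι R d)
        = CTS.cL ((LinearMap.id : Module.Dual R F →ₗ[R] Module.Dual R F) d) := fun d => by
    simp only [extContract, ExteriorAlgebra.lift_ι_apply]
    rfl
  have hΦ' : ∀ m : F,
      extContractD R (ExteriorAlgebra.ι R m) = CTS.cL (Module.Dual.eval R F m) := fun m => by
    simp only [extContractD, ExteriorAlgebra.lift_ι_apply, LinearMap.comp_apply]
  have hBB' : ∀ (w : Module.Dual R F) (m : F),
      (LinearMap.id : Module.Dual R F →ₗ[R] Module.Dual R F) w m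
        = Module.Dual.eval R F m w := fun w m => rfl
  by_cases hp : p ≤ n
  · by_cases hq : q ≤ n
    · have htopF : CTS.deg R F (n+1) = ⊥ := CTS.deg_top_vanish bas (by omega)
      have hγ' : γ ∈ CTS.deg R (Module.Dual R F) n := hγ
      have ha' : a ∈ CTS.deg R F p := ha
      have hb' : b ∈ CTS.deg R F q := hb
      exact CTS.main_generic (R := R) (M := F) (W := Module.Dual R F) LinearMap.id
        (Module.Dual.eval R F) (extContract R)
        (extContractD R) hΦ hΦ' hBB' n htopF hγ' p hp a ha' q hq b hb'
    · have hb0 : b = 0 := hbot q (by omega) b hb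
      rw [hb0, (extContract R (extContractD R a γ)).map_zero, map_zero (extContractD R),
        LinearMap.zero_apply, map_zero (extContract R), LinearMap.zero_apply, smul_zero]
  · have ha0 : a = 0 := hbot p (by omega) a ha
    rw [ha0, map_zero (extContractD R), LinearMap.zero_apply, map_zero (extContract R),
      LinearMap.zero_apply, (extContract R (extContractD R b γ)).map_zero, smul_zero]
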